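/- Let q, N, a, b, y be natural numbers with 1 ≤ q, a < q, b < q, y < q, and q² < N. Define e := (a + N − b) mod N. Then: (i) e = 0 if and only if a = b; (ii) if b < a, then e = a − b, so 0 < e < q, and (y·e) mod N = y·(a − b); (iii) if a < b, then e = N − (b − a), so N − q < e < N, and (y·(N − e)) mod N = y·(b − a). Consequently, when a ≠ b, the value y can be recovered exactly by rational division: y = ((y·e) mod N)/e in case (ii) and y = ((y·(N−e)) mod N)/(N − e) in case (iii). -/
import Mathlib


/-- Correctness of the FHE–LHE compatibility mechanism: for `a, b, y < q` and
`q² < N`, with `e := (a + N − b) mod N`, (i) `e = 0 ↔ a = b`; (ii) if `b < a`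
then `e = a − b ∈ (0, q)` and `(y·e) mod N = y·(a − b)`, so `y` is recovered by
rational division; (iii) if `a < b` then `e = N − (b − a) ∈ (N − q, N)` and
`(y·(N − e)) mod N = y·(b − a)`, so `y` is again recovered by rational division. -/
theorem fhe_lhe_compatibility (q N a b y : ℕ)
    (hq : 1 ≤ q) (ha : a < q) (hb : b < q) (hy : y < q) (hN : q ^ 2 < N) :
    let e := (a + N - b) % N
    (e = 0 ↔ a = b) ∧
    (b < a → e = a - b ∧ 0 < e ∧ e < q ∧ (y * e) % N = y * (a - b) ∧
      (((y * e) % N : ℕ) : ℚ) / (e : ℚ) = (y : ℚ)) ∧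
    (a < b → e = N - (b - a) ∧ N - q < e ∧ e < N ∧
      (y * (N - e)) % N = y * (b - a) ∧
      (((y * (N - e)) % N : ℕ) : ℚ) / ((N - e : ℕ) : ℚ) = (y : ℚ)) := by
  intro e
  have hqN : q ≤ N := le_of_lt (lt_of_le_of_lt (Nat.le_self_pow two_ne_zero q) hN)
  have hmul : ∀ u v : ℕ, u < q → v < q → u * v < N := by
    intro u v hu hv
    calc u * v < q * q := Nat.mul_lt_mul_of_lt_of_lt hu hv
    _ = q ^ 2 := (sq q).symm
    _ < N := hN
  have hebig : a < b → e = N - (b - a) := by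
    intro hab
    have h1 : a + N - b = N - (b - a) := by omega
    have h2 : N - (b - a) < N := by omega
    simp only [e, h1, Nat.mod_eq_of_lt h2]
  have hesmall : b ≤ a → e = a - b := by
    intro hab
    have h1 : a + N - b = N + (a - b) := by omega
    simp only [e, h1]
    rw [Nat.add_mod_left, Nat.mod_eq_of_lt (by omega)]
  refine ⟨?_, ?_, ?_⟩
  · constructor
    · intro h
      rcases lt_or_ge a b with hlt | hle
      · have := hebig hlt; omega
      · have := hesmall hle; omega
    · intro h; subst h; rw [hesmall le_rfl]; omega
  · intro hlt
    have he := hesmall hlt.le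
    have hmod : (y * e) % N = y * (a - b) := by
      rw [he, Nat.mod_eq_of_lt (hmul y (a - b) hy (by omega))]
    refine ⟨he, by omega, by omega, hmod, ?_⟩
    rw [hmod, he]
    have : (a - b : ℕ) ≠ 0 := by omega
    push_cast
    field_simp
  · intro hlt
    have he := hebig hlt
    have hNe : N - e = b - a := by omega
    have hmod : (y * (N - e)) % N = y * (b - a) := by
      rw [hNe, Nat.mod_eq_of_lt (hmul y (b - a) hy (by omega))]
    refine ⟨he, by omega, by omega, hmod, ?_⟩
    rw [hmod, hNe]
    have : (b - a : ℕ) ≠ 0 := by omega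
    push_cast
    field_simp
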